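/- Let A ∈ ℝ^{n×n} be a symmetric positive semidefinite matrix with kernel equal to the span of e₁ (the first standard basis vector), let u = (1,...,1)ᵀ, and let vᵢ = eᵢ - e_{i+1} for i = 1,...,n-1. Then the matrix M whose rows are (A v₁)ᵀ, ..., (A v_{n-1})ᵀ, uᵀ is invertible, and moreover M e₁ = e_n, so M⁻¹ e_n = e₁. -/

import Mathlib

open Finset Matrix

/-- If `A` is symmetric positive semidefinite with kernel `Span(e₁)`,
`u = (1,…,1)ᵀ` and `vᵢ = eᵢ - e_{i+1}`, then the matrix `M` with rows
`(A v₁)ᵀ, …, (A v_{n-1})ᵀ, uᵀ` is invertible, `M e₁ = e_n`, and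
`M⁻¹ e_n = e₁`. -/
theorem stmt5 (m : ℕ) (A : Matrix (Fin (m + 1)) (Fin (m + 1)) ℝ)
    (hA : A.PosSemidef)
    (hker : ∀ x : Fin (m + 1) → ℝ, A.mulVec x = 0 ↔
      x ∈ Submodule.span ℝ {(Pi.single 0 1 : Fin (m + 1) → ℝ)}) :
    let M : Matrix (Fin (m + 1)) (Fin (m + 1)) ℝ :=
      Matrix.of (Fin.snoc
        (fun i : Fin m =>
          A.mulVec (Pi.single i.castSucc 1 - Pi.single i.succ 1))
        (fun _ => (1 : ℝ)))
    IsUnit M ∧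
      M.mulVec (Pi.single 0 1) = Pi.single (Fin.last m) 1 ∧
      M⁻¹.mulVec (Pi.single (Fin.last m) 1) = Pi.single 0 1 := by
  intro M
  have hrowM : ∀ i : Fin m,
      M i.castSucc = A.mulVec (Pi.single i.castSucc 1 - Pi.single i.succ 1) :=
    fun i => by funext j; simp only [M, Matrix.of_apply, Fin.snoc_castSucc]
  have hlastM : M (Fin.last m) = fun _ => (1 : ℝ) := by funext j; simp only [M, Matrix.of_apply, Fin.snoc_last]
  have hsym : Aᵀ = A := by
    have := hA.isHermitian
    simpa [Matrix.IsHermitian, Matrix.conjTranspose_eq_transpose_of_trivial] using this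
  -- A e₀ = 0
  have hA0 : A.mulVec (Pi.single 0 1) = 0 :=
    (hker _).mpr (Submodule.mem_span_singleton_self _)
  have hcol : ∀ j, A j 0 = 0 := by
    intro j
    have := congrFun hA0 j
    simpa [Matrix.mulVec, dotProduct_single] using this
  -- M e₀ = e_last
  have hMe : M.mulVec (Pi.single 0 1) = Pi.single (Fin.last m) 1 := by
    funext j
    have hj : M.mulVec (Pi.single 0 1) j = M j 0 := by
      simp [Matrix.mulVec, dotProduct_single]
    rw [hj]
    induction j using Fin.lastCases with
    | last => simp [hlastM]
    | cast i =>
        have h1 : M i.castSucc 0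
            = (A.mulVec (Pi.single i.castSucc 1 - Pi.single i.succ 1)) 0 := by
          rw [hrowM i]
        have h2 : (A.mulVec (Pi.single i.castSucc 1 - Pi.single i.succ 1)) 0 = 0 := by
          have : ∀ k, A 0 k = 0 := by
            intro k
            have := hcol k
            rw [← hsym]; simpa [Matrix.transpose_apply] using this
          simp [Matrix.mulVec, dotProduct, this]
        have hne : i.castSucc ≠ Fin.last m := (Fin.castSucc_lt_last i).ne
        rw [h1, h2, Pi.single_eq_of_ne hne]
  -- kernel of M is trivial
  have hinj : ∀ x : Fin (m + 1) → ℝ, M.mulVec x = 0 → x = 0 := by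
    intro x hx
    set y := A.mulVec x with hy
    have hrow : ∀ i : Fin m, y i.castSucc = y i.succ := by
      intro i
      have h1 := congrFun hx i.castSucc
      have h2 : M.mulVec x i.castSucc
          = (A.mulVec (Pi.single i.castSucc 1 - Pi.single i.succ 1)) ⬝ᵥ x := by
        show M i.castSucc ⬝ᵥ x = _
        rw [hrowM i]
      have h3 : (A.mulVec (Pi.single i.castSucc 1 - Pi.single i.succ 1)) ⬝ᵥ x
          = y i.castSucc - y i.succ := by
        rw [dotProduct_comm, dotProduct_mulVec,
          ← Matrix.mulVec_transpose, hsym]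
        simp [dotProduct_sub, dotProduct_single, hy]
      have := h2.symm.trans h1
      rw [h3] at this
      have h4 : y i.castSucc - y i.succ = 0 := by simpa using this
      linarith
    have hconst : ∀ j, y j = y 0 := by
      intro j
      induction j using Fin.induction with
      | zero => rfl
      | succ i ih => rw [← hrow i]; exact ih
    have hsum : ∑ k, x k = 0 := by
      have h1 := congrFun hx (Fin.last m)
      have h2 : M.mulVec x (Fin.last m) = ∑ k, x k := by
        show M (Fin.last m) ⬝ᵥ x = _
        rw [hlastM]
        simp [dotProduct]
      rw [h2] at h1; simpa using h1
    have hquad : x ⬝ᵥ y = 0 := by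
      have hxy : x ⬝ᵥ y = (∑ k, x k) * y 0 := by
        rw [Finset.sum_mul]
        show ∑ k, x k * y k = _
        exact Finset.sum_congr rfl fun k _ => by rw [hconst k]
      rw [hxy, hsum, zero_mul]
    have hAx : A.mulVec x = 0 := by
      refine (hA.dotProduct_mulVec_zero_iff x).mp ?_
      simpa [hy] using hquad
    obtain ⟨c, rfl⟩ := Submodule.mem_span_singleton.mp ((hker x).mp hAx)
    have hc : c = 0 := by
      have : ∑ k, (c • (Pi.single 0 1 : Fin (m + 1) → ℝ)) k = c := by
        simp [Pi.single_apply, Finset.mul_sum]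
      rw [hsum] at this
      exact this.symm
    rw [hc, zero_smul]
  have hdet : M.det ≠ 0 := by
    intro h
    obtain ⟨v, hv, hMv⟩ := (Matrix.exists_mulVec_eq_zero_iff).mpr h
    exact hv (hinj v hMv)
  have hU : IsUnit M := (Matrix.isUnit_iff_isUnit_det M).mpr (isUnit_iff_ne_zero.mpr hdet)
  refine ⟨hU, hMe, ?_⟩
  rw [← hMe, Matrix.mulVec_mulVec, Matrix.nonsing_inv_mul M (isUnit_iff_ne_zero.mpr hdet),
    Matrix.one_mulVec]
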